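/- Let d ≥ 3, q ≥ 2, and l_1 = 0, l_2, …, l_{d−1} ∈ ℤ_q with l_i − l_j a unit whenever i ≠ j. Let β = (b_{i,j}) ∈ GL_{d−1}(ℤ) satisfy, for all 1 ≤ i ≠ j ≤ d−1, the identity (l_j − l_i) + ∏_{k=1}^{d−1}(t+l_k)^{b_{k,i}} − ∏_{m=1}^{d−1}(t+l_m)^{b_{m,j}} = 0 in R_d(ℤ_q). If b_{n,i} < 0 for some indices 1 ≤ n, i ≤ d−1, then b_{n,j} = −1 for every j with 1 ≤ j ≤ d−1, and b_{k,j} ≥ 0 for every k ≠ n and every j. -/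

import Mathlib

open Polynomial

/-- The multiplicative set of `ℤ_q[t]` generated by the polynomials `t + l i`. -/
noncomputable def dlSub (q d : ℕ) (l : Fin (d-1) → ZMod q) : Submonoid (Polynomial (ZMod q)) :=
  Submonoid.closure {p | ∃ i : Fin (d-1), p = X + C (l i)}

/-- The ring `R_d(ℤ_q) = ℤ_q[t, (t+l_1)⁻¹, …, (t+l_{d-1})⁻¹]`, realized as the localization of
`ℤ_q[t]` at the multiplicative set generated by the `t + l i`. -/
abbrev Rd (q d : ℕ) (l : Fin (d-1) → ZMod q) := Localization (dlSub q d l)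

/-- The image of `t + l i` in `R_d(ℤ_q)`, as a unit. -/
noncomputable def tU (q d : ℕ) (l : Fin (d-1) → ZMod q) (i : Fin (d-1)) : (Rd q d l)ˣ :=
  (IsLocalization.map_units (M := dlSub q d l) (Rd q d l)
    ⟨X + C (l i), Submonoid.subset_closure ⟨i, rfl⟩⟩).unit

/-- The monomial `∏ i (t + l i) ^ (v i)`, as a unit of `R_d(ℤ_q)`. -/
noncomputable def monU (q d : ℕ) (l : Fin (d-1) → ZMod q) (v : Fin (d-1) → ℤ) : (Rd q d l)ˣ :=
  ∏ i, tU q d l i ^ (v i)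

/-- The condition on a `(d-1) × (d-1)` integer matrix `β = (b k i)` that, for all `i ≠ j`,
`(l j - l i) + ∏ k (t + l k)^(b k i) - ∏ k (t + l k)^(b k j) = 0` holds in `R_d(ℤ_q)`. -/
def kCond (q d : ℕ) (l : Fin (d-1) → ZMod q) (β : Matrix (Fin (d-1)) (Fin (d-1)) ℤ) : Prop :=
  ∀ i j : Fin (d-1), i ≠ j →
    algebraMap (Polynomial (ZMod q)) (Rd q d l) (C (l j - l i))
      + (monU q d l (fun k => β k i) : Rd q d l)
      - (monU q d l (fun k => β k j) : Rd q d l) = 0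

/-- The set `𝒦` of invertible integer matrices `β` such that the defining identities hold
both for the entries of `β` and for the entries of `β⁻¹`. -/
def kSet (q d : ℕ) (l : Fin (d-1) → ZMod q) : Set (Matrix.GeneralLinearGroup (Fin (d-1)) ℤ) :=
  {β | kCond q d l ↑β ∧ kCond q d l ↑(β⁻¹)}

namespace S9

variable (q d : ℕ) (l : Fin (d-1) → ZMod q)

lemma dlSub_le_nzd : dlSub q d l ≤ nonZeroDivisors (Polynomial (ZMod q)) := by
  rw [dlSub, Submonoid.closure_le]
  rintro p ⟨i, rfl⟩
  exact (monic_X_add_C (l i)).mem_nonZeroDivisors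

lemma algMap_inj : Function.Injective (algebraMap (Polynomial (ZMod q)) (Rd q d l)) :=
  IsLocalization.injective _ (dlSub_le_nzd q d l)

lemma tU_val (i : Fin (d-1)) :
    ((tU q d l i : (Rd q d l)ˣ) : Rd q d l) = algebraMap (Polynomial (ZMod q)) (Rd q d l) (X + C (l i)) :=
  IsUnit.unit_spec _

/-- The polynomial `∏ k (X + l k)^(w k)`. -/
noncomputable def Phi (w : Fin (d-1) → ℕ) : Polynomial (ZMod q) :=
  ∏ k, (X + C (l k)) ^ (w k)

lemma monU_coe (m : Fin (d-1) → ℕ) :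
    ((monU q d l fun k => (m k : ℤ)) : Rd q d l)
      = algebraMap (Polynomial (ZMod q)) (Rd q d l) (Phi q d l m) := by
  rw [monU, Phi, map_prod]
  rw [← Units.coeHom_apply, map_prod]
  refine Finset.prod_congr rfl fun k _ => ?_
  rw [Units.coeHom_apply, zpow_natCast, Units.val_pow_eq_pow_val, tU_val, map_pow]

lemma monU_add (v w : Fin (d-1) → ℤ) :
    monU q d l (v + w) = monU q d l v * monU q d l w := by
  rw [monU, monU, monU, ← Finset.prod_mul_distrib]
  exact Finset.prod_congr rfl fun k _ => zpow_add (tU q d l k) (v k) (w k)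

lemma master (β : Matrix (Fin (d-1)) (Fin (d-1)) ℤ) (hβ : kCond q d l β)
    (i j : Fin (d-1)) (hij : i ≠ j) (e : Fin (d-1) → ℕ)
    (hei : ∀ k, 0 ≤ (e k : ℤ) + β k i) (hej : ∀ k, 0 ≤ (e k : ℤ) + β k j) :
    C (l j - l i) * Phi q d l e
      + Phi q d l (fun k => ((e k : ℤ) + β k i).toNat)
      - Phi q d l (fun k => ((e k : ℤ) + β k j).toNat) = 0 := by
  have h := hβ i j hij
  set φ := algebraMap (Polynomial (ZMod q)) (Rd q d l) with hφ
  have key : ∀ (v : Fin (d-1) → ℤ), (∀ k, 0 ≤ (e k : ℤ) + v k) →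
      ((monU q d l v : Rd q d l)) * φ (Phi q d l e)
        = φ (Phi q d l (fun k => ((e k : ℤ) + v k).toNat)) := by
    intro v hv
    rw [← monU_coe, ← Units.val_mul, ← monU_add]
    have h1 : (v + fun k => ((e k : ℤ))) =
        fun k => ((((e k : ℤ) + v k).toNat : ℕ) : ℤ) := by
      funext k
      rw [Int.toNat_of_nonneg (hv k)]
      exact (add_comm _ _)
    rw [h1, monU_coe]
  have hmul := congrArg (fun x => x * φ (Phi q d l e)) h
  simp only [zero_mul, add_mul, sub_mul] at hmul
  rw [key _ hei, key _ hej] at hmul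
  apply algMap_inj q d l
  rw [map_zero, map_sub, map_add, map_mul]
  exact hmul

lemma eval_Phi (w : Fin (d-1) → ℕ) (r : Fin (d-1)) :
    (Phi q d l w).eval (-(l r)) = ∏ k, (l k - l r) ^ (w k) := by
  rw [Phi, eval_prod]
  refine Finset.prod_congr rfl fun k _ => ?_
  rw [eval_pow, eval_add, eval_X, eval_C]
  ring_nf

lemma eval_Phi_zero (w : Fin (d-1) → ℕ) (r : Fin (d-1)) (h : w r ≠ 0) :
    (Phi q d l w).eval (-(l r)) = 0 := by
  rw [eval_Phi]
  refine Finset.prod_eq_zero (Finset.mem_univ r) ?_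
  rw [sub_self, zero_pow h]

lemma eval_Phi_unit (hl : ∀ i j : Fin (d-1), i ≠ j → IsUnit (l i - l j))
    (w : Fin (d-1) → ℕ) (r : Fin (d-1)) (h : w r = 0) :
    IsUnit ((Phi q d l w).eval (-(l r))) := by
  rw [eval_Phi]
  refine Finset.prod_induction _ IsUnit (fun a b => IsUnit.mul) isUnit_one ?_
  intro k _
  rcases eq_or_ne k r with rfl | hkr
  · rw [h, pow_zero]; exact isUnit_one
  · exact (hl k r hkr).pow _


variable {q d l} in
lemma K1 (hq : 2 ≤ q) (hl : ∀ i j : Fin (d-1), i ≠ j → IsUnit (l i - l j))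
    {β : Matrix (Fin (d-1)) (Fin (d-1)) ℤ} (hβ : kCond q d l β)
    {i j r : Fin (d-1)} (hij : i ≠ j) (h1 : β r i < 0) (h2 : β r i < β r j) : False := by
  haveI : Fact (1 < q) := ⟨hq⟩
  set e : Fin (d-1) → ℕ := fun k => (max 0 (max (-(β k i)) (-(β k j)))).toNat with he
  have hcast : ∀ k, (e k : ℤ) = max 0 (max (-(β k i)) (-(β k j))) := fun k =>
    Int.toNat_of_nonneg (le_max_left _ _)
  have hei : ∀ k, 0 ≤ (e k : ℤ) + β k i := by
    intro k; rw [hcast]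
    have : -(β k i) ≤ max 0 (max (-(β k i)) (-(β k j))) :=
      le_trans (le_max_left _ _) (le_max_right _ _)
    omega
  have hej : ∀ k, 0 ≤ (e k : ℤ) + β k j := by
    intro k; rw [hcast]
    have : -(β k j) ≤ max 0 (max (-(β k i)) (-(β k j))) :=
      le_trans (le_max_right _ _) (le_max_right _ _)
    omega
  have hm := master q d l β hβ i j hij e hei hej
  have hev := congrArg (fun p => Polynomial.eval (-(l r)) p) hm
  simp only [eval_sub, eval_add, eval_mul, eval_C, eval_zero] at hev
  have her : (e r : ℤ) = -(β r i) := by rw [hcast]; omega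
  have hPe : (Phi q d l e).eval (-(l r)) = 0 := by
    apply eval_Phi_zero
    omega
  have hPb : (Phi q d l (fun k => ((e k : ℤ) + β k j).toNat)).eval (-(l r)) = 0 := by
    apply eval_Phi_zero
    show ((e r : ℤ) + β r j).toNat ≠ 0
    omega
  have hPa : IsUnit ((Phi q d l (fun k => ((e k : ℤ) + β k i).toNat)).eval (-(l r))) := by
    apply eval_Phi_unit q d l hl
    show ((e r : ℤ) + β r i).toNat = 0
    omega
  rw [hPe, hPb, mul_zero, zero_add, sub_zero] at hev
  rw [hev] at hPa
  exact zero_ne_one (isUnit_zero_iff.mp hPa)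

variable {q d l} in
lemma K2 (hq : 2 ≤ q) (hl : ∀ i j : Fin (d-1), i ≠ j → IsUnit (l i - l j))
    {β : Matrix (Fin (d-1)) (Fin (d-1)) ℤ} (hβ : kCond q d l β)
    {i j r : Fin (d-1)} (hij : i ≠ j) (h1 : 1 ≤ β r i) (h2 : 1 ≤ β r j) : False := by
  haveI : Fact (1 < q) := ⟨hq⟩
  set e : Fin (d-1) → ℕ := fun k => (max 0 (max (-(β k i)) (-(β k j)))).toNat with he
  have hcast : ∀ k, (e k : ℤ) = max 0 (max (-(β k i)) (-(β k j))) := fun k =>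
    Int.toNat_of_nonneg (le_max_left _ _)
  have hei : ∀ k, 0 ≤ (e k : ℤ) + β k i := by
    intro k; rw [hcast]
    have : -(β k i) ≤ max 0 (max (-(β k i)) (-(β k j))) :=
      le_trans (le_max_left _ _) (le_max_right _ _)
    omega
  have hej : ∀ k, 0 ≤ (e k : ℤ) + β k j := by
    intro k; rw [hcast]
    have : -(β k j) ≤ max 0 (max (-(β k i)) (-(β k j))) :=
      le_trans (le_max_right _ _) (le_max_right _ _)
    omega
  have hm := master q d l β hβ i j hij e hei hej
  have hev := congrArg (fun p => Polynomial.eval (-(l r)) p) hm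
  simp only [eval_sub, eval_add, eval_mul, eval_C, eval_zero] at hev
  have her : (e r : ℤ) = 0 := by rw [hcast]; omega
  have hPa : (Phi q d l (fun k => ((e k : ℤ) + β k i).toNat)).eval (-(l r)) = 0 := by
    apply eval_Phi_zero
    show ((e r : ℤ) + β r i).toNat ≠ 0
    omega
  have hPb : (Phi q d l (fun k => ((e k : ℤ) + β k j).toNat)).eval (-(l r)) = 0 := by
    apply eval_Phi_zero
    show ((e r : ℤ) + β r j).toNat ≠ 0
    omega
  have hPe : IsUnit ((Phi q d l e).eval (-(l r))) := by
    apply eval_Phi_unit q d l hl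
    omega
  rw [hPa, hPb, sub_zero, add_zero] at hev
  have : IsUnit ((l j - l i) * (Phi q d l e).eval (-(l r))) :=
    (hl j i hij.symm).mul hPe
  rw [hev] at this
  exact zero_ne_one (isUnit_zero_iff.mp this)

variable {q d l} in
lemma rowConst (hq : 2 ≤ q) (hl : ∀ i j : Fin (d-1), i ≠ j → IsUnit (l i - l j))
    {β : Matrix (Fin (d-1)) (Fin (d-1)) ℤ} (hβ : kCond q d l β)
    {r i : Fin (d-1)} (h : β r i < 0) : ∀ j, β r j = β r i := by
  intro j
  rcases eq_or_ne j i with rfl | hne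
  · rfl
  rcases lt_trichotomy (β r i) (β r j) with hlt | heq | hgt
  · exact absurd (K1 hq hl hβ (Ne.symm hne) h hlt) not_false
  · exact heq.symm
  · exact absurd (K1 hq hl hβ hne (lt_of_le_of_lt (le_of_lt hgt) h) hgt) not_false

variable {q d l} in
lemma col_eq_false (hq : 2 ≤ q) (hl : ∀ i j : Fin (d-1), i ≠ j → IsUnit (l i - l j))
    {β : Matrix (Fin (d-1)) (Fin (d-1)) ℤ} (hβ : kCond q d l β)
    {j0 j1 : Fin (d-1)} (h01 : j0 ≠ j1) (hcol : ∀ r, β r j0 = β r j1) : False := by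
  haveI : Fact (1 < q) := ⟨hq⟩
  have h := hβ j0 j1 h01
  have hfun : (fun k => β k j0) = (fun k => β k j1) := funext hcol
  rw [hfun, add_sub_cancel_right] at h
  have : C (l j1 - l j0) = 0 := algMap_inj q d l (by rw [map_zero]; exact h)
  have hu := hl j1 j0 h01.symm
  rw [show l j1 - l j0 = 0 from by simpa using congrArg (fun p => Polynomial.coeff p 0) this] at hu
  exact zero_ne_one (isUnit_zero_iff.mp hu)

end S9

/-- Lemma 3.5 (negative entries).  If `β ∈ GL_{d-1}(ℤ)` satisfies the identities
`(l_j - l_i) + ∏_k (t+l_k)^(b_{k,i}) - ∏_m (t+l_m)^(b_{m,j}) = 0` in `R_d(ℤ_q)` for all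
`i ≠ j`, and some entry `b_{n,i}` is negative, then every entry of row `n` equals `-1`
and all entries outside row `n` are nonnegative. -/


theorem statement9 (q d : ℕ) (hq : 2 ≤ q) (hd : 3 ≤ d) (l : Fin (d-1) → ZMod q)
    (hl0 : l ⟨0, by omega⟩ = 0)
    (hl : ∀ i j : Fin (d-1), i ≠ j → IsUnit (l i - l j))
    (β : Matrix.GeneralLinearGroup (Fin (d-1)) ℤ)
    (hβ : kCond q d l ↑β)
    (n i : Fin (d-1))
    (hni : (β : Matrix (Fin (d-1)) (Fin (d-1)) ℤ) n i < 0) :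
    (∀ j : Fin (d-1), (β : Matrix (Fin (d-1)) (Fin (d-1)) ℤ) n j = -1) ∧
    (∀ (k : Fin (d-1)), k ≠ n →
      ∀ j : Fin (d-1), 0 ≤ (β : Matrix (Fin (d-1)) (Fin (d-1)) ℤ) k j) := by
  classical
  haveI : Fact (1 < q) := ⟨hq⟩
  set M : Matrix (Fin (d-1)) (Fin (d-1)) ℤ := ↑β with hM
  have hrow : ∀ j, M n j = M n i := S9.rowConst hq hl hβ hni
  have hdet : IsUnit M.det := (Matrix.isUnit_iff_isUnit_det M).mp ⟨β, hM.symm⟩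
  have hc : M n i = -1 := by
    have hMn : M n = (M n i) • (fun _ => (1:ℤ)) := by
      funext j
      simp [hrow j]
    have h1 : M = M.updateRow n ((M n i) • (fun _ => (1:ℤ))) := by
      rw [← hMn, Matrix.updateRow_eq_self]
    have h2 : M.det = (M n i) * (M.updateRow n (fun _ => (1:ℤ))).det := by
      conv_lhs => rw [h1]
      exact Matrix.det_updateRow_smul M n (M n i) _
    rw [h2] at hdet
    have hu := isUnit_of_mul_isUnit_left hdet
    rcases Int.isUnit_iff.mp hu with h | h
    · omega
    · exact h
  refine ⟨fun j => by rw [hrow j, hc], ?_⟩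
  intro k hk j
  by_contra hneg
  push_neg at hneg
  have hrowk : ∀ j', M k j' = M k j := S9.rowConst hq hl hβ hneg
  set S : Finset (Fin (d-1)) := Finset.univ.filter (fun r => M r i < 0) with hS
  have hnS : n ∈ S := Finset.mem_filter.mpr ⟨Finset.mem_univ _, hni⟩
  have hkS : k ∈ S := Finset.mem_filter.mpr ⟨Finset.mem_univ _, by rw [hrowk i]; exact hneg⟩
  have hScard : 1 < S.card := Finset.one_lt_card.mpr ⟨k, hkS, n, hnS, hk⟩
  set T : Finset (Fin (d-1)) := Finset.univ.filter (fun r => ¬ (M r i < 0)) with hT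
  have hST : S.card + T.card = d - 1 := by
    rw [hS, hT, Finset.card_filter_add_card_filter_not]
    simp
  set J : Finset (Fin (d-1)) := Finset.univ.filter (fun j' => ∃ r, 1 ≤ M r j') with hJ
  have hJT : J.card ≤ T.card := by
    apply Finset.card_le_card_of_injOn (fun j' => if h : ∃ r, 1 ≤ M r j' then h.choose else n)
    · intro j' hj'
      have h := (Finset.mem_filter.mp hj').2
      simp only [dif_pos h]
      refine Finset.mem_filter.mpr ⟨Finset.mem_univ _, ?_⟩
      intro hlt
      have hcr := S9.rowConst hq hl hβ hlt j'
      have := h.choose_spec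
      omega
    · intro j1 hj1 j2 hj2 hfe
      have h1 := (Finset.mem_filter.mp hj1).2
      have h2 := (Finset.mem_filter.mp hj2).2
      simp only [dif_pos h1, dif_pos h2] at hfe
      by_contra hne
      have hs2 := h2.choose_spec
      rw [← hfe] at hs2
      exact S9.K2 hq hl hβ hne h1.choose_spec hs2
  have hcompl : 1 < (Finset.univ \ J).card := by
    have hsd := Finset.card_sdiff_of_subset (Finset.subset_univ J)
    have hcard : (Finset.univ : Finset (Fin (d-1))).card = d - 1 := by simp
    omega
  obtain ⟨j0, hj0, j1, hj1, hj01⟩ := Finset.one_lt_card.mp hcompl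
  have hnotJ : ∀ j' , j' ∈ Finset.univ \ J → ∀ r, M r j' ≤ 0 := by
    intro j' hj' r
    have hh := (Finset.mem_sdiff.mp hj').2
    rw [hJ, Finset.mem_filter] at hh
    push_neg at hh
    have := hh (Finset.mem_univ _) r
    omega
  have hzero : ∀ (jz : Fin (d-1)), jz ∈ Finset.univ \ J → ∀ r, ¬ (M r i < 0) → M r jz = 0 := by
    intro jz hjz r hrS
    rcases lt_or_eq_of_le (hnotJ jz hjz r) with hlt | heq
    · have hcr := S9.rowConst hq hl hβ hlt i
      omega
    · exact heq
  have hcols : ∀ r, M r j0 = M r j1 := by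
    intro r
    by_cases hrS : M r i < 0
    · rw [S9.rowConst hq hl hβ hrS j0, S9.rowConst hq hl hβ hrS j1]
    · rw [hzero j0 hj0 r hrS, hzero j1 hj1 r hrS]
  exact S9.col_eq_false hq hl hβ hj01 hcols
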